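/- Let f : R^n → R be convex differentiable and λ > 0, H(x) = f(x) + λ‖x‖₀. If x* satisfies x* ∈ H_γ(x* − ∇f(x*)/(L+μ)) with γ = sqrt(2λ/(L+μ)) (a fixed point of the hard-thresholding proximal map), then (∇f(x*))_i = 0 for every i with x*_i ≠ 0, and x* is a local minimizer of H. -/

import Mathlib

open scoped Classical

/-- `‖x‖₀`: the number of nonzero components of `x`. -/
noncomputable def norm0 {n : ℕ} (x : EuclideanSpace ℝ (Fin n)) : ℕ :=
  (Finset.univ.filter fun i => x i ≠ 0).card

/-- Membership in the set-valued hard thresholding operator `H_γ(c)`. -/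
def memHardThresh {n : ℕ} (γ : ℝ) (c x : EuclideanSpace ℝ (Fin n)) : Prop :=
  ∀ i : Fin n,
    (γ < |c i| → x i = c i) ∧
    (|c i| = γ → x i = 0 ∨ x i = c i) ∧
    (|c i| < γ → x i = 0)

lemma grad_convex_ineq {n : ℕ} (f : EuclideanSpace ℝ (Fin n) → ℝ)
    (hconv : ConvexOn ℝ Set.univ f) {x g : EuclideanSpace ℝ (Fin n)}
    (hg : HasGradientAt f g x) (y : EuclideanSpace ℝ (Fin n)) :
    f x + ∑ i, g i * (y i - x i) ≤ f y := by
  by_cases hxy : y = x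
  · simp [hxy]
  · set φ : ℝ → ℝ := fun t => f (x + t • (y - x)) with hφ
    have hφconv : ConvexOn ℝ Set.univ φ := by
      have := hconv.comp_affineMap
        (AffineMap.lineMap x y : ℝ →ᵃ[ℝ] EuclideanSpace ℝ (Fin n))
      have heq : f ∘ (AffineMap.lineMap x y : ℝ →ᵃ[ℝ] EuclideanSpace ℝ (Fin n)) = φ := by
        funext t
        simp [Function.comp, AffineMap.lineMap_apply, vsub_eq_sub, vadd_eq_add, φ, add_comm]
      rw [heq] at this
      simpa using this
    have hline : HasDerivAt (fun t : ℝ => x + t • (y - x)) (y - x) 0 := by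
      simpa using ((hasDerivAt_id (0:ℝ)).smul_const (y - x)).const_add x
    have hx0 : x + (0:ℝ) • (y - x) = x := by simp
    have hF : HasFDerivAt f ((InnerProductSpace.toDual ℝ (EuclideanSpace ℝ (Fin n))) g)
        (x + (0:ℝ) • (y - x)) := by rw [hx0]; exact hg.hasFDerivAt
    have hd : HasDerivAt φ (∑ i, g i * (y i - x i)) 0 := by
      have := hF.comp_hasDerivAt 0 hline
      simpa [φ, Function.comp_def, PiLp.inner_apply, RCLike.inner_apply, PiLp.sub_apply, mul_comm] using this
    have := hφconv.le_slope_of_hasDerivAt (Set.mem_univ 0) (Set.mem_univ 1)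
      one_pos hd
    rw [slope_def_field] at this
    simp [φ] at this
    linarith

lemma coord_le_norm {n : ℕ} (w : EuclideanSpace ℝ (Fin n)) (i : Fin n) : |w i| ≤ ‖w‖ := by
  rw [EuclideanSpace.norm_eq]
  have h1 : |w i| = Real.sqrt (‖w i‖ ^ 2) := by
    rw [Real.sqrt_sq_eq_abs]; simp
  rw [h1]
  apply Real.sqrt_le_sqrt
  exact Finset.single_le_sum (f := fun j => ‖w j‖ ^ 2) (fun j _ => by positivity)
    (Finset.mem_univ i)

theorem fixed_point_is_local_minimizer {n : ℕ}
    (f : EuclideanSpace ℝ (Fin n) → ℝ)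
    (gradf : EuclideanSpace ℝ (Fin n) → EuclideanSpace ℝ (Fin n))
    (hconv : ConvexOn ℝ Set.univ f)
    (hf : ∀ z, HasGradientAt f (gradf z) z)
    (lam L μ : ℝ) (hlam : 0 < lam) (hL : 0 < L) (hμ : 0 < μ)
    (xs : EuclideanSpace ℝ (Fin n))
    (hfix : memHardThresh (Real.sqrt (2 * lam / (L + μ)))
      (xs - (1 / (L + μ)) • gradf xs) xs) :
    (∀ i : Fin n, xs i ≠ 0 → gradf xs i = 0) ∧
      IsLocalMin (fun z => f z + lam * (norm0 z : ℝ)) xs := by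
  set γ := Real.sqrt (2 * lam / (L + μ)) with hγdef
  have hLμ : 0 < L + μ := by linarith
  have hγpos : 0 < γ := Real.sqrt_pos.mpr (by positivity)
  set g := gradf xs with hg
  have hci : ∀ i : Fin n, (xs - (1 / (L + μ)) • g) i = xs i - (1 / (L + μ)) * g i := by
    intro i; simp [PiLp.sub_apply, PiLp.smul_apply, smul_eq_mul]
  have hdiv : (1:ℝ) / (L + μ) ≠ 0 := by positivity
  -- Part 1
  have h1 : ∀ i : Fin n, xs i ≠ 0 → g i = 0 := by
    intro i hi
    obtain ⟨hA, hB, hC⟩ := hfix i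
    rw [hci i] at hA hB hC
    have key : xs i = xs i - (1 / (L + μ)) * g i := by
      rcases lt_trichotomy |xs i - (1 / (L + μ)) * g i| γ with h | h | h
      · exact absurd (hC h) hi
      · exact (hB h).resolve_left hi
      · exact hA h
    have h0 : (1 / (L + μ)) * g i = 0 := sub_eq_self.mp key.symm
    exact (mul_eq_zero.mp h0).resolve_left hdiv
  refine ⟨h1, ?_⟩
  -- |xs i| ≥ γ on the support
  have h2 : ∀ i : Fin n, xs i ≠ 0 → γ ≤ |xs i| := by
    intro i hi
    obtain ⟨hA, hB, hC⟩ := hfix i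
    rw [hci i, h1 i hi] at hC
    simp only [mul_zero, sub_zero] at hC
    by_contra hlt
    exact hi (hC (lt_of_not_ge hlt))
  -- bound on the gradient off the support
  have h3 : ∀ i : Fin n, xs i = 0 → |g i| ≤ (L + μ) * γ := by
    intro i hi
    obtain ⟨hA, hB, hC⟩ := hfix i
    rw [hci i, hi] at hA
    simp only [zero_sub, abs_neg] at hA
    have hle : |(1 / (L + μ)) * g i| ≤ γ := by
      by_contra hgt
      have h0 := hA (lt_of_not_ge hgt)
      have hgi0 : (1 / (L + μ)) * g i = 0 := by linarith
      rw [hgi0] at hgt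
      exact hgt (by simpa using le_of_lt hγpos)
    rw [abs_mul, abs_of_pos (by positivity : (0:ℝ) < 1 / (L + μ)), one_div] at hle
    calc |g i| = (L + μ) * ((L + μ)⁻¹ * |g i|) := by field_simp
    _ ≤ (L + μ) * γ := mul_le_mul_of_nonneg_left hle (le_of_lt hLμ)
  -- choose the radius
  set ε := min γ (lam / ((L + μ) * γ)) with hε
  have hεpos : 0 < ε := lt_min hγpos (by positivity)
  rw [IsLocalMin, IsMinFilter, Metric.eventually_nhds_iff]
  refine ⟨ε, hεpos, ?_⟩
  intro z hz
  have hzc : ∀ i : Fin n, |z i - xs i| < ε := by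
    intro i
    have h := coord_le_norm (z - xs) i
    rw [PiLp.sub_apply] at h
    calc |z i - xs i| ≤ ‖z - xs‖ := h
    _ = dist z xs := (dist_eq_norm z xs).symm
    _ < ε := hz
  have hsupp : ∀ i : Fin n, xs i ≠ 0 → z i ≠ 0 := by
    intro i hi h0
    have h := hzc i
    rw [h0, zero_sub, abs_neg] at h
    have := lt_of_lt_of_le h (min_le_left _ _)
    exact absurd (h2 i hi) (not_le.mpr this)
  -- counting
  set A := Finset.univ.filter (fun i => xs i ≠ 0) with hA
  set B := Finset.univ.filter (fun i => z i ≠ 0) with hB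
  set S := Finset.univ.filter (fun i => z i ≠ 0 ∧ xs i = 0) with hS
  have hcard : (norm0 z : ℝ) = (norm0 xs : ℝ) + S.card := by
    have hBsplit : B.filter (fun i => xs i ≠ 0) ∪ B.filter (fun i => ¬ xs i ≠ 0) = B :=
      Finset.filter_union_filter_not_eq _ B
    have e1 : B.filter (fun i => xs i ≠ 0) = A := by
      ext i
      simp only [hA, hB, Finset.mem_filter, Finset.mem_univ, true_and]
      exact ⟨fun h => h.2, fun h => ⟨hsupp i h, h⟩⟩
    have e2 : B.filter (fun i => ¬ xs i ≠ 0) = S := by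
      ext i
      simp only [hS, hB, Finset.mem_filter, Finset.mem_univ, true_and, not_not]
    have hd : Disjoint (B.filter (fun i => xs i ≠ 0)) (B.filter (fun i => ¬ xs i ≠ 0)) :=
      Finset.disjoint_filter_filter_not B B _
    have hcardB : B.card = A.card + S.card := by
      rw [← hBsplit, Finset.card_union_of_disjoint hd, e1, e2]
    have hn : norm0 z = norm0 xs + S.card := by
      simpa [norm0, ← hA, ← hB] using hcardB
    rw [hn]; push_cast; ring
  -- the gradient inequality
  have hgi := grad_convex_ineq f hconv (hf xs) z
  rw [← hg] at hgi
  -- terms vanish off S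
  have hEq : ∑ i, g i * (z i - xs i) = ∑ i ∈ S, g i * (z i - xs i) := by
    refine (Finset.sum_subset (Finset.subset_univ S) ?_).symm
    intro i _ hiS
    by_cases hxi : xs i = 0
    · have hzi : z i = 0 := by
        by_contra hzi
        exact hiS (by simp [hS, hzi, hxi])
      rw [hxi, hzi]; ring
    · rw [h1 i hxi]; ring
  have hsum : (-lam) * S.card ≤ ∑ i, g i * (z i - xs i) := by
    rw [hEq]
    have hterm : ∀ i ∈ S, (-lam) ≤ g i * (z i - xs i) := by
      intro i hiS
      have hm := Finset.mem_filter.mp hiS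
      have hzi : z i ≠ 0 := hm.2.1
      have hxi : xs i = 0 := hm.2.2
      rw [hxi, sub_zero]
      have hb1 : |g i| ≤ (L + μ) * γ := h3 i hxi
      have hb2 : |z i| < ε := by
        have h := hzc i; rwa [hxi, sub_zero] at h
      have hb3 : |z i| ≤ lam / ((L + μ) * γ) :=
        le_of_lt (lt_of_lt_of_le hb2 (min_le_right _ _))
      have habs : |g i * z i| ≤ lam := by
        rw [abs_mul]
        calc |g i| * |z i| ≤ ((L + μ) * γ) * (lam / ((L + μ) * γ)) :=
          mul_le_mul hb1 hb3 (abs_nonneg _) (by positivity)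
        _ = lam := by field_simp
      linarith [neg_abs_le (g i * z i)]
    have hconst : (-lam) * S.card = ∑ _i ∈ S, (-lam) := by
      rw [Finset.sum_const, nsmul_eq_mul]; ring
    rw [hconst]
    exact Finset.sum_le_sum hterm
  show f xs + lam * (norm0 xs : ℝ) ≤ f z + lam * (norm0 z : ℝ)
  rw [hcard]
  have hcs : (0:ℝ) ≤ S.card := Nat.cast_nonneg _
  nlinarith [hgi, hsum]
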